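/- arXiv:1904.03072 — 2 statements merged into one kernel-verified Lean document; each statement's English description precedes it below -/
import Mathlib

section
/- For any b ∈ ℝ, δ > 0, and c ≥ 0, there exists a constant C (depending on b and δ) such that for all τ > 0, ∫₀^τ e^{b(τ-s)} e^{-δ(e^τ - e^s)} e^{-cs} ds ≤ C e^{-(c+1)τ}. -/
open MeasureTheory Real

theorem stmt1 (b : ℝ) (δ : ℝ) (hδ : 0 < δ) (c : ℝ) (hc : 0 ≤ c) :
    ∃ C : ℝ, ∀ τ : ℝ, 0 < τ →
      ∫ s in Set.Ioo (0:ℝ) τ,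
          Real.exp (b * (τ - s)) * Real.exp (-δ * (Real.exp τ - Real.exp s)) * Real.exp (-c * s)
        ≤ C * Real.exp (-(c + 1) * τ) := by
  set β : ℝ := b + c + 1 with hβ
  refine ⟨2 / δ * Real.exp (2 * β ^ 2 / δ), fun τ hτ => ?_⟩
  -- pointwise bound
  have hpt : ∀ s ∈ Set.Ioo (0:ℝ) τ,
      Real.exp (b * (τ - s)) * Real.exp (-δ * (Real.exp τ - Real.exp s)) * Real.exp (-c * s)
        ≤ Real.exp (2 * β ^ 2 / δ + -(c + 1) * τ) *
            (Real.exp s * Real.exp (-(δ / 2) * (Real.exp τ - Real.exp s))) := by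
    rintro s ⟨hs0, hsτ⟩
    rw [← Real.exp_add, ← Real.exp_add, ← Real.exp_add, ← Real.exp_add, Real.exp_le_exp]
    set t : ℝ := τ - s with ht
    have htpos : 0 < t := by simp [ht]; linarith
    -- exp t ≥ 1 + t + t^2/4
    have ha : 1 + t / 2 ≤ Real.exp (t / 2) := by linarith [Real.add_one_le_exp (t / 2)]
    have hexp : 1 + t + t ^ 2 / 4 ≤ Real.exp t := by
      have h2 : Real.exp t = Real.exp (t / 2) * Real.exp (t / 2) := by
        rw [← Real.exp_add]; ring_nf
      nlinarith [Real.exp_pos (t / 2)]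
    have hes : (1:ℝ) ≤ Real.exp s := Real.one_le_exp hs0.le
    have hE : t + t ^ 2 / 4 ≤ Real.exp τ - Real.exp s := by
      have hfac : Real.exp τ - Real.exp s = Real.exp s * (Real.exp t - 1) := by
        rw [mul_sub, ← Real.exp_add, ht]; ring_nf
      have h1 : Real.exp t - 1 ≤ Real.exp s * (Real.exp t - 1) := by
        nlinarith [hexp, sq_nonneg t]
      nlinarith
    have key : β * t - δ / 2 * (Real.exp τ - Real.exp s) ≤ 2 * β ^ 2 / δ := by
      rw [le_div_iff₀ hδ]
      nlinarith [sq_nonneg (2 * β - δ * t / 2),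
        mul_le_mul_of_nonneg_left hE (le_of_lt (by positivity : (0:ℝ) < δ ^ 2 / 2)), htpos.le, hδ.le]
    have := key
    simp only [hβ, ht] at this ⊢
    nlinarith [this]
  have hc1 : Continuous fun s : ℝ =>
      Real.exp (b * (τ - s)) * Real.exp (-δ * (Real.exp τ - Real.exp s)) * Real.exp (-c * s) := by
    fun_prop
  have hc2 : Continuous fun s : ℝ =>
      Real.exp (2 * β ^ 2 / δ + -(c + 1) * τ) *
        (Real.exp s * Real.exp (-(δ / 2) * (Real.exp τ - Real.exp s))) := by
    fun_prop
  have hInt1 : IntegrableOn (fun s : ℝ =>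
      Real.exp (b * (τ - s)) * Real.exp (-δ * (Real.exp τ - Real.exp s)) * Real.exp (-c * s))
      (Set.Ioo 0 τ) :=
    (hc1.integrableOn_Icc (a := 0) (b := τ)).mono_set Set.Ioo_subset_Icc_self
  have hInt2 : IntegrableOn (fun s : ℝ =>
      Real.exp (2 * β ^ 2 / δ + -(c + 1) * τ) *
        (Real.exp s * Real.exp (-(δ / 2) * (Real.exp τ - Real.exp s)))) (Set.Ioo 0 τ) :=
    (hc2.integrableOn_Icc (a := 0) (b := τ)).mono_set Set.Ioo_subset_Icc_self
  have hmono := setIntegral_mono_on hInt1 hInt2 measurableSet_Ioo hpt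
  -- compute the integral of the majorant
  have hg : ∫ s in Set.Ioo (0:ℝ) τ,
      Real.exp s * Real.exp (-(δ / 2) * (Real.exp τ - Real.exp s)) ≤ 2 / δ := by
    have heq : ∫ s in Set.Ioo (0:ℝ) τ,
        Real.exp s * Real.exp (-(δ / 2) * (Real.exp τ - Real.exp s))
        = ∫ s in (0:ℝ)..τ, Real.exp s * Real.exp (-(δ / 2) * (Real.exp τ - Real.exp s)) := by
      rw [intervalIntegral.integral_of_le hτ.le, integral_Ioc_eq_integral_Ioo]
    rw [heq]
    have hderiv : ∀ s ∈ Set.uIcc (0:ℝ) τ,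
        HasDerivAt (fun u => 2 / δ * Real.exp (-(δ / 2) * (Real.exp τ - Real.exp u)))
          (Real.exp s * Real.exp (-(δ / 2) * (Real.exp τ - Real.exp s))) s := by
      intro s _
      have h1 : HasDerivAt (fun u : ℝ => Real.exp τ - Real.exp u) (-Real.exp s) s := by
        have h0 := (hasDerivAt_const s (Real.exp τ)).sub (Real.hasDerivAt_exp s)
        rw [zero_sub] at h0
        exact h0
      have h2 := (h1.const_mul (-(δ / 2))).exp
      have h3 := h2.const_mul (2 / δ)
      refine h3.congr_deriv ?_
      rw [show ∀ E e : ℝ, 2 / δ * (E * (-(δ / 2) * -e)) = (2 / δ * (δ / 2)) * (e * E) from fun E e => by ring,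
        show 2 / δ * (δ / 2) = 1 from by field_simp [hδ.ne'], one_mul]
    have hci : Continuous fun s : ℝ =>
        Real.exp s * Real.exp (-(δ / 2) * (Real.exp τ - Real.exp s)) := by fun_prop
    rw [intervalIntegral.integral_eq_sub_of_hasDerivAt hderiv (hci.intervalIntegrable _ _)]
    have : Real.exp τ - Real.exp τ = 0 := by ring
    have hpos : 0 < Real.exp (-(δ / 2) * (Real.exp τ - Real.exp 0)) := Real.exp_pos _
    rw [this]
    simp only [mul_zero, neg_zero, Real.exp_zero]
    have h4 : 0 < 2 / δ * Real.exp (-(δ / 2) * (Real.exp τ - 1)) := by positivity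
    linarith
  rw [MeasureTheory.integral_const_mul] at hmono
  have hfin : Real.exp (2 * β ^ 2 / δ + -(c + 1) * τ) *
      ∫ s in Set.Ioo (0:ℝ) τ, Real.exp s * Real.exp (-(δ / 2) * (Real.exp τ - Real.exp s))
        ≤ Real.exp (2 * β ^ 2 / δ + -(c + 1) * τ) * (2 / δ) :=
    mul_le_mul_of_nonneg_left hg (Real.exp_pos _).le
  refine (hmono.trans hfin).trans (le_of_eq ?_)
  rw [Real.exp_add]; ring
end

section
/- Let W : ℝ → ℝ be bounded, c ∈ ℝ, δ₁ > 0. There exist C > 0 and μ₀ > 0 such that for all |μ| ≥ μ₀ and all f ∈ H²(ℝ), g ∈ L²(ℝ) with f'' + cf' + Wf + δ₁ f + iμ f = g, one has ‖f‖_{H¹} ≤ C ‖g‖_{L²}. In particular, the resolvent (L₁ + δ₁ + iμ)^{-1} (L₁ = ∂²_z + c∂_z + W) is bounded from L² to H¹, uniformly for |μ| ≥ μ₀. -/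
open MeasureTheory Complex

lemma aux_int_mulconj {u v : ℝ → ℂ} (hu : MemLp u 2 volume) (hv : MemLp v 2 volume) :
    Integrable (fun x => u x * (starRingEnd ℂ) (v x)) volume := by
  have hmeas : AEStronglyMeasurable (fun x => u x * (starRingEnd ℂ) (v x)) volume :=
    hu.1.mul (Complex.continuous_conj.comp_aestronglyMeasurable hv.1)
  have hu2 : Integrable (fun x => ‖u x‖ ^ 2) volume :=
    (memLp_two_iff_integrable_sq_norm hu.1).1 hu
  have hv2 : Integrable (fun x => ‖v x‖ ^ 2) volume :=
    (memLp_two_iff_integrable_sq_norm hv.1).1 hv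
  refine Integrable.mono' ((hu2.add hv2).div_const 2) hmeas ?_
  filter_upwards with x
  have h : ‖u x * (starRingEnd ℂ) (v x)‖ = ‖u x‖ * ‖v x‖ := by
    rw [norm_mul, RCLike.norm_conj]
  rw [h]
  simp only [Pi.add_apply]
  nlinarith [sq_nonneg (‖u x‖ - ‖v x‖), norm_nonneg (u x), norm_nonneg (v x)]

lemma aux_cs_mulconj {u v : ℝ → ℂ} (hu : MemLp u 2 volume) (hv : MemLp v 2 volume) :
    ‖∫ x, u x * (starRingEnd ℂ) (v x)‖ ≤
      Real.sqrt (∫ x, ‖u x‖ ^ 2) * Real.sqrt (∫ x, ‖v x‖ ^ 2) := by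
  have h1 : ‖∫ x, u x * (starRingEnd ℂ) (v x)‖ ≤ ∫ x, ‖u x‖ * ‖v x‖ := by
    refine le_trans (norm_integral_le_integral_norm _) (le_of_eq ?_)
    congr 1; funext x; rw [norm_mul, RCLike.norm_conj]
  have hpq : (2:ℝ).HolderConjugate 2 := by
    constructor <;> norm_num
  have hun : MemLp (fun x => ‖u x‖) (ENNReal.ofReal 2) volume := by
    simpa [ENNReal.ofReal_ofNat] using hu.norm
  have hvn : MemLp (fun x => ‖v x‖) (ENNReal.ofReal 2) volume := by
    simpa [ENNReal.ofReal_ofNat] using hv.norm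
  have h2 := integral_mul_le_Lp_mul_Lq_of_nonneg hpq
    (Filter.Eventually.of_forall fun x => norm_nonneg (u x))
    (Filter.Eventually.of_forall fun x => norm_nonneg (v x)) hun hvn
  refine h1.trans (h2.trans (le_of_eq ?_))
  have e1 : ∀ w : ℝ → ℂ, ∫ x, ‖w x‖ ^ (2:ℝ) = ∫ x, ‖w x‖ ^ 2 := by
    intro w; congr 1; funext x; rw [← Real.rpow_natCast ‖w x‖ 2]; norm_num
  have e2 : ∀ w : ℝ → ℂ, (∫ x, ‖w x‖ ^ 2 : ℝ) ^ ((1:ℝ)/2) = Real.sqrt (∫ x, ‖w x‖ ^ 2) := by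
    intro w
    rw [Real.sqrt_eq_rpow]
  rw [e1, e1, e2, e2]

lemma aux_ibp {f : ℝ → ℂ} (hf2 : ContDiff ℝ 2 f) (hfL2 : MemLp f 2 volume)
    (hf'L2 : MemLp (deriv f) 2 volume) (hf''L2 : MemLp (deriv (deriv f)) 2 volume) :
    (∫ x, deriv (deriv f) x * (starRingEnd ℂ) (f x))
        = -(((∫ x, ‖deriv f x‖^2 : ℝ) : ℂ)) ∧
      (∫ x, deriv f x * (starRingEnd ℂ) (f x)).re = 0 := by
  have hfd : Differentiable ℝ f := hf2.differentiable (by norm_num)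
  have hf'd : Differentiable ℝ (deriv f) := by
    have h : ContDiff ℝ (1+1 : WithTop ℕ∞) f := by norm_num at hf2 ⊢; exact hf2
    exact ((contDiff_succ_iff_deriv).mp h).2.2.differentiable (by norm_num)
  have hdf : ∀ x, HasDerivAt f (deriv f x) x := fun x => (hfd x).hasDerivAt
  have hdf' : ∀ x, HasDerivAt (deriv f) (deriv (deriv f) x) x := fun x => (hf'd x).hasDerivAt
  have hconj : ∀ x, HasDerivAt (fun y => (starRingEnd ℂ) (f y)) ((starRingEnd ℂ) (deriv f x)) x := by
    intro x
    have := Complex.conjCLE.toContinuousLinearMap.hasFDerivAt.comp_hasDerivAt x (hdf x)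
    simpa [Function.comp_def] using this
  -- first IBP
  have key1 : (∫ x, (deriv (deriv f) x * (starRingEnd ℂ) (f x)
      + deriv f x * (starRingEnd ℂ) (deriv f x))) = 0 := by
    refine integral_eq_zero_of_hasDerivAt_of_integrable
      (f := fun y => deriv f y * (starRingEnd ℂ) (f y)) (fun x => (hdf' x).mul (hconj x)) ?_ ?_
    · exact (aux_int_mulconj hf''L2 hfL2).add (aux_int_mulconj hf'L2 hf'L2)
    · exact aux_int_mulconj hf'L2 hfL2
  have e1 : (∫ x, deriv f x * (starRingEnd ℂ) (deriv f x)) = ((∫ x, ‖deriv f x‖^2 : ℝ) : ℂ) := by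
    have : (fun x => deriv f x * (starRingEnd ℂ) (deriv f x))
        = fun x => ((‖deriv f x‖^2 : ℝ) : ℂ) := by
      funext x
      rw [Complex.mul_conj, Complex.normSq_eq_norm_sq]
    rw [this]
    exact integral_ofReal
  rw [integral_add (aux_int_mulconj hf''L2 hfL2) (aux_int_mulconj hf'L2 hf'L2), e1] at key1
  refine ⟨by linear_combination key1, ?_⟩
  -- second IBP
  have key2 : (∫ x, (deriv f x * (starRingEnd ℂ) (f x)
      + f x * (starRingEnd ℂ) (deriv f x))) = 0 := by
    refine integral_eq_zero_of_hasDerivAt_of_integrable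
      (f := fun y => f y * (starRingEnd ℂ) (f y)) (fun x => (hdf x).mul (hconj x)) ?_ ?_
    · exact (aux_int_mulconj hf'L2 hfL2).add (aux_int_mulconj hfL2 hf'L2)
    · exact aux_int_mulconj hfL2 hfL2
  have e2 : (∫ x, f x * (starRingEnd ℂ) (deriv f x))
      = (starRingEnd ℂ) (∫ x, deriv f x * (starRingEnd ℂ) (f x)) := by
    rw [← integral_conj]
    congr 1; funext x
    simp [mul_comm]
  rw [integral_add (aux_int_mulconj hf'L2 hfL2) (aux_int_mulconj hfL2 hf'L2), e2,
    Complex.add_conj] at key2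
  have := Complex.ofReal_eq_zero.mp key2
  linarith

lemma aux_alg (Kd A M s t u : ℝ) (hKd : 0 < Kd) (hA : 0 ≤ A)
    (hs0 : 0 ≤ s) (ht0 : 0 ≤ t) (hu0 : 0 ≤ u)
    (hM : 3 * (A + 1) * (Kd + 1) ≤ M)
    (H1 : M * s^2 ≤ A * (t * s) + u * s)
    (H2 : t^2 ≤ Kd * s^2 + u * s) :
    s^2 + t^2 ≤ 9 * u^2 := by
  rcases eq_or_lt_of_le hs0 with hsz | hsp
  · have h0 : t^2 ≤ 0 := by rw [← hsz] at H2; simpa using H2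
    have h1 : s^2 = 0 := by rw [← hsz]; norm_num
    nlinarith [sq_nonneg u]
  · have hMs : M * s ≤ A * t + u := by
      have h' : (M * s) * s ≤ (A * t + u) * s := by nlinarith [H1]
      exact le_of_mul_le_mul_right h' hsp
    have hkey := mul_le_mul_of_nonneg_right hM hs0
    have step2 : 3 * (Kd + 1) * s ≤ t + u := by
      have h' : (A + 1) * (3 * (Kd + 1) * s) ≤ (A + 1) * (t + u) := by
        nlinarith [hkey, hMs, mul_nonneg hA ht0, mul_nonneg hA hu0]
      exact le_of_mul_le_mul_left h' (by positivity)
    have step3 : 9 * (Kd + 1)^2 * s^2 ≤ (t + u)^2 := by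
      have h3 := mul_self_le_mul_self (by positivity) step2
      nlinarith [h3]
    have hBB : 9 * (Kd * s^2) ≤ (t + u)^2 := by
      nlinarith [step3, sq_nonneg s, hKd]
    have hus3 : 3 * (u * s) ≤ u * (t + u) := by
      have h5 := mul_le_mul_of_nonneg_left step2 hu0
      nlinarith [h5, mul_nonneg hu0 hs0, hKd]
    have hT : 9 * t^2 ≤ (t + u)^2 + 3 * (u * (t + u)) := by nlinarith [H2, hBB, hus3]
    have htu : t ≤ 2 * u := by
      nlinarith [hT, ht0, hu0, sq_nonneg (t - u), sq_nonneg (t - 2*u), mul_nonneg ht0 hu0]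
    have hsu : s ≤ u := by
      nlinarith [step2, htu, hKd, mul_nonneg hKd.le hs0]
    nlinarith [htu, hsu, hu0, ht0, hs0]

set_option maxHeartbeats 1600000 in
theorem stmt14 (W : ℝ → ℝ) (hWmeas : Measurable W) (K : ℝ) (hWbdd : ∀ x, |W x| ≤ K)
    (c δ₁ : ℝ) (hδ₁ : 0 < δ₁) :
    ∃ C > 0, ∃ μ₀ > 0, ∀ μ : ℝ, μ₀ ≤ |μ| →
      ∀ f g : ℝ → ℂ,
        ContDiff ℝ 2 f →
        MemLp f 2 volume →
        MemLp (deriv f) 2 volume →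
        MemLp (deriv (deriv f)) 2 volume →
        MemLp g 2 volume →
        (∀ x : ℝ,
          deriv (deriv f) x + (c : ℂ) * deriv f x + (W x : ℂ) * f x + (δ₁ : ℂ) * f x
            + Complex.I * (μ : ℂ) * f x = g x) →
        Real.sqrt ((∫ x : ℝ, ‖f x‖ ^ 2) + ∫ x : ℝ, ‖deriv f x‖ ^ 2)
          ≤ C * Real.sqrt (∫ x : ℝ, ‖g x‖ ^ 2) := by
  have hK : 0 ≤ K := le_trans (abs_nonneg _) (hWbdd 0)
  refine ⟨3, by norm_num, 3 * (|c| + 1) * (K + δ₁ + 1), by positivity, ?_⟩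
  intro μ hμ f g hf2 hfL2 hf'L2 hf''L2 hgL2 hEq
  set a := ∫ x : ℝ, ‖f x‖ ^ 2 with ha_def
  set b := ∫ x : ℝ, ‖deriv f x‖ ^ 2 with hb_def
  set G := ∫ x : ℝ, ‖g x‖ ^ 2 with hG_def
  have ha0 : 0 ≤ a := integral_nonneg fun x => sq_nonneg _
  have hb0 : 0 ≤ b := integral_nonneg fun x => sq_nonneg _
  have hG0 : 0 ≤ G := integral_nonneg fun x => sq_nonneg _
  set s := Real.sqrt a with hs_def
  set t := Real.sqrt b with ht_def
  set u := Real.sqrt G with hu_def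
  have hs0 : 0 ≤ s := Real.sqrt_nonneg _
  have ht0 : 0 ≤ t := Real.sqrt_nonneg _
  have hu0 : 0 ≤ u := Real.sqrt_nonneg _
  have hs2 : s ^ 2 = a := Real.sq_sqrt ha0
  have ht2 : t ^ 2 = b := Real.sq_sqrt hb0
  have hu2 : u ^ 2 = G := Real.sq_sqrt hG0
  -- integrability facts
  have hfsq : Integrable (fun x => ‖f x‖ ^ 2) volume :=
    (memLp_two_iff_integrable_sq_norm hfL2.1).1 hfL2
  have hWfsq : Integrable (fun x => W x * ‖f x‖ ^ 2) volume := by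
    have hmeas : AEStronglyMeasurable (fun x => W x * ‖f x‖ ^ 2) volume := by
      exact (hWmeas.aestronglyMeasurable).mul (hfsq.aestronglyMeasurable)
    refine Integrable.mono' (hfsq.const_mul K) hmeas ?_
    filter_upwards with x
    rw [Real.norm_eq_abs, abs_mul, _root_.abs_of_nonneg (sq_nonneg ‖f x‖)]
    exact mul_le_mul_of_nonneg_right (hWbdd x) (sq_nonneg _)
  set I2 := ∫ x, deriv f x * (starRingEnd ℂ) (f x) with hI2_def
  set I4 := ∫ x, g x * (starRingEnd ℂ) (f x) with hI4_def
  set Wt := ∫ x, W x * ‖f x‖ ^ 2 with hWt_def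
  obtain ⟨hT1, hI2re⟩ := aux_ibp hf2 hfL2 hf'L2 hf''L2
  have hPe : (fun x => f x * (starRingEnd ℂ) (f x)) = fun x => ((‖f x‖^2 : ℝ) : ℂ) := by
    funext x
    rw [Complex.mul_conj, Complex.normSq_eq_norm_sq]
  have hPa : (∫ x, f x * (starRingEnd ℂ) (f x)) = ((a : ℝ) : ℂ) := by
    rw [hPe]; exact integral_ofReal
  -- the five-term splitting
  have i1 : Integrable (fun x => deriv (deriv f) x * (starRingEnd ℂ) (f x)) volume :=
    aux_int_mulconj hf''L2 hfL2
  have i2 : Integrable (fun x => (c:ℂ) * (deriv f x * (starRingEnd ℂ) (f x))) volume :=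
    (aux_int_mulconj hf'L2 hfL2).const_mul _
  have i3 : Integrable (fun x => ((W x * ‖f x‖^2 : ℝ) : ℂ)) volume := hWfsq.ofReal
  have i4 : Integrable (fun x => (δ₁:ℂ) * (f x * (starRingEnd ℂ) (f x))) volume :=
    (aux_int_mulconj hfL2 hfL2).const_mul _
  have i5 : Integrable (fun x => Complex.I * (μ:ℂ) * (f x * (starRingEnd ℂ) (f x))) volume :=
    (aux_int_mulconj hfL2 hfL2).const_mul _
  have key : (∫ x, (deriv (deriv f) x * (starRingEnd ℂ) (f x)
        + ((c:ℂ) * (deriv f x * (starRingEnd ℂ) (f x))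
        + (((W x * ‖f x‖^2 : ℝ) : ℂ)
        + ((δ₁:ℂ) * (f x * (starRingEnd ℂ) (f x))
        + Complex.I * (μ:ℂ) * (f x * (starRingEnd ℂ) (f x))))))) = I4 := by
    rw [hI4_def]
    congr 1; funext x
    have h3 : ((W x * ‖f x‖^2 : ℝ) : ℂ) = (W x : ℂ) * (f x * (starRingEnd ℂ) (f x)) := by
      rw [Complex.mul_conj, Complex.normSq_eq_norm_sq]
      push_cast; ring
    rw [h3]
    linear_combination (hEq x) * (starRingEnd ℂ) (f x)
  have e45 : (∫ x, ((δ₁:ℂ) * (f x * (starRingEnd ℂ) (f x))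
      + Complex.I * (μ:ℂ) * (f x * (starRingEnd ℂ) (f x))))
      = (∫ x, (δ₁:ℂ) * (f x * (starRingEnd ℂ) (f x)))
        + ∫ x, Complex.I * (μ:ℂ) * (f x * (starRingEnd ℂ) (f x)) := integral_add i4 i5
  have e345 : (∫ x, (((W x * ‖f x‖^2 : ℝ) : ℂ)
      + ((δ₁:ℂ) * (f x * (starRingEnd ℂ) (f x))
      + Complex.I * (μ:ℂ) * (f x * (starRingEnd ℂ) (f x)))))
      = (∫ x, ((W x * ‖f x‖^2 : ℝ) : ℂ))
        + ∫ x, ((δ₁:ℂ) * (f x * (starRingEnd ℂ) (f x))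
          + Complex.I * (μ:ℂ) * (f x * (starRingEnd ℂ) (f x))) := integral_add i3 (i4.add i5)
  have e2345 : (∫ x, ((c:ℂ) * (deriv f x * (starRingEnd ℂ) (f x))
      + (((W x * ‖f x‖^2 : ℝ) : ℂ)
      + ((δ₁:ℂ) * (f x * (starRingEnd ℂ) (f x))
      + Complex.I * (μ:ℂ) * (f x * (starRingEnd ℂ) (f x))))))
      = (∫ x, (c:ℂ) * (deriv f x * (starRingEnd ℂ) (f x)))
        + ∫ x, (((W x * ‖f x‖^2 : ℝ) : ℂ)
          + ((δ₁:ℂ) * (f x * (starRingEnd ℂ) (f x))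
          + Complex.I * (μ:ℂ) * (f x * (starRingEnd ℂ) (f x)))) :=
    integral_add i2 (i3.add (i4.add i5))
  have e12345 : (∫ x, (deriv (deriv f) x * (starRingEnd ℂ) (f x)
      + ((c:ℂ) * (deriv f x * (starRingEnd ℂ) (f x))
      + (((W x * ‖f x‖^2 : ℝ) : ℂ)
      + ((δ₁:ℂ) * (f x * (starRingEnd ℂ) (f x))
      + Complex.I * (μ:ℂ) * (f x * (starRingEnd ℂ) (f x)))))))
      = (∫ x, deriv (deriv f) x * (starRingEnd ℂ) (f x))
        + ∫ x, ((c:ℂ) * (deriv f x * (starRingEnd ℂ) (f x))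
          + (((W x * ‖f x‖^2 : ℝ) : ℂ)
          + ((δ₁:ℂ) * (f x * (starRingEnd ℂ) (f x))
          + Complex.I * (μ:ℂ) * (f x * (starRingEnd ℂ) (f x))))) :=
    integral_add i1 (i2.add (i3.add (i4.add i5)))
  rw [e12345, e2345, e345, e45, integral_const_mul, integral_const_mul,
    integral_const_mul, hT1, hPa] at key
  have hWtc : (∫ x, ((W x * ‖f x‖^2 : ℝ) : ℂ)) = ((Wt : ℝ) : ℂ) := integral_ofReal
  rw [hWtc] at key
  -- real and imaginary parts
  have hre := congrArg Complex.re key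
  have him := congrArg Complex.im key
  simp only [Complex.add_re, Complex.add_im, Complex.neg_re, Complex.neg_im,
    Complex.ofReal_re, Complex.ofReal_im, Complex.mul_re, Complex.mul_im,
    Complex.I_re, Complex.I_im, hI2re, Complex.ofReal_re, Complex.ofReal_im] at hre him
  ring_nf at hre him
  -- bounds via Cauchy-Schwarz
  have hCS2 : ‖I2‖ ≤ t * s := by
    rw [hI2_def, ht_def, hs_def, hb_def, ha_def]
    exact aux_cs_mulconj hf'L2 hfL2
  have hCS4 : ‖I4‖ ≤ u * s := by
    rw [hI4_def, hu_def, hs_def, hG_def, ha_def]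
    exact aux_cs_mulconj hgL2 hfL2
  have hWtle : Wt ≤ K * a := by
    rw [hWt_def, ha_def, ← integral_const_mul]
    refine integral_mono hWfsq (hfsq.const_mul K) ?_
    intro x
    exact mul_le_mul_of_nonneg_right (le_trans (le_abs_self _) (hWbdd x)) (sq_nonneg _)
  rw [← hb_def] at hre
  rw [← hI2_def] at him
  -- real inequalities
  have hI4re : |I4.re| ≤ u * s := le_trans (Complex.abs_re_le_norm I4) hCS4
  have hI4im : |I4.im| ≤ u * s := le_trans (Complex.abs_im_le_norm I4) hCS4
  have hI2im : |I2.im| ≤ t * s := le_trans (Complex.abs_im_le_norm I2) hCS2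
  have H2' : t^2 ≤ (K + δ₁) * s^2 + u * s := by
    rw [ht2, hs2]
    have : b = Wt + δ₁ * a - I4.re := by linarith
    have h4 : -I4.re ≤ u * s := by
      have := neg_abs_le I4.re; linarith
    nlinarith [hWtle]
  have H1' : |μ| * s^2 ≤ |c| * (t * s) + u * s := by
    rw [hs2]
    have hμa : μ * a = I4.im - c * I2.im := by linarith
    calc |μ| * a = |μ * a| := by rw [abs_mul, _root_.abs_of_nonneg ha0]
      _ = |I4.im - c * I2.im| := by rw [hμa]
      _ ≤ |I4.im| + |c| * |I2.im| := by
          rw [sub_eq_add_neg]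
          refine le_trans (abs_add_le _ _) ?_
          rw [abs_neg, abs_mul]
      _ ≤ u * s + |c| * (t * s) := by
          have h6 := mul_le_mul_of_nonneg_left hI2im (abs_nonneg c)
          linarith [hI4im, h6]
      _ = |c| * (t * s) + u * s := by ring
  -- now pure algebra
  clear_value a b G s t u I2 I4 Wt
  have halg := aux_alg (K + δ₁) |c| |μ| s t u (by positivity) (abs_nonneg c)
    hs0 ht0 hu0 hμ H1' H2'
  have hab : a + b ≤ 9 * u^2 := by rw [← hs2, ← ht2]; exact halg
  calc Real.sqrt (a + b) ≤ Real.sqrt (9 * u^2) := Real.sqrt_le_sqrt hab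
    _ = 3 * u := by
        rw [show (9:ℝ) * u^2 = (3*u)^2 by ring, Real.sqrt_sq (by positivity)]
end
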